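/- Let G be a finite group and ω a normalized 3-cocycle on G with values in ℂˣ. Then the set Z_ω(G) := {g ∈ Z(G) : γ_g is a 2-coboundary of G} is a subgroup of the center Z(G); that is, it contains the identity and is closed under multiplication and inversion. -/

import Mathlib

/-- Conjugation: `g^x = x⁻¹ * g * x`. -/
def cjg {G : Type*} [Group G] (g x : G) : G := x⁻¹ * g * x

/-- A normalized 3-cocycle on `G` with values in `ℂˣ`. -/
def IsNormalized3Cocycle {G : Type*} [Group G] (ω : G → G → G → ℂˣ) : Prop :=
  (∀ x y z w, ω y z w * ω x (y * z) w * ω x y z = ω (x * y) z w * ω x y (z * w)) ∧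
  (∀ x y z, (x = 1 ∨ y = 1 ∨ z = 1) → ω x y z = 1)

/-- `θ_g(x,y) = ω(g,x,y)·ω(x,y,g^{xy}) / ω(x,g^x,y)`. -/
def theta {G : Type*} [Group G] (ω : G → G → G → ℂˣ) (g x y : G) : ℂˣ :=
  ω g x y * ω x y (cjg g (x * y)) / ω x (cjg g x) y

/-- `γ_g(x,y) = ω(x,y,g)·ω(g,x^g,y^g) / ω(x,g,y^g)`. -/
def gam {G : Type*} [Group G] (ω : G → G → G → ℂˣ) (g x y : G) : ℂˣ :=
  ω x y g * ω g (cjg x g) (cjg y g) / ω x g (cjg y g)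

/-- A 2-coboundary of `G` with values in `ℂˣ`. -/
def Is2Coboundary {G : Type*} [Group G] (β : G → G → ℂˣ) : Prop :=
  ∃ f : G → ℂˣ, f 1 = 1 ∧ ∀ x y, β x y = f x * f y / f (x * y)

/-- A (normalized) 2-cocycle of `G` with values in `ℂˣ`. -/
def Is2Cocycle {G : Type*} [Group G] (β : G → G → ℂˣ) : Prop :=
  (∀ x, β x 1 = 1 ∧ β 1 x = 1) ∧
  (∀ x y z, β x y * β (x * y) z = β y z * β x (y * z))

/-- An ω-admissible pair `(τ, ν)` for a subgroup `A`. -/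
def IsAdmissiblePair {G : Type*} [Group G] (ω : G → G → G → ℂˣ) (A : Subgroup G)
    (τ : A → G → ℂˣ) (ν : A → (G →* ℂˣ)) : Prop :=
  (∀ x, τ 1 x = 1) ∧ (∀ a, τ a 1 = 1) ∧
  (∀ (a : A) (x y : G), theta ω (a : G) x y = τ a x * τ a y / τ a (x * y)) ∧
  (ν 1 = 1) ∧
  (∀ (a b : A) (g : G),
    theta ω g (a : G) (b : G) * (τ a g * τ b g / τ (a * b) g)
      = ν a g * ν b g / ν (a * b) g)

section Aux

variable {G : Type*} [Group G]

lemma cjg_central (x z : G) (hz : z ∈ Subgroup.center G) : cjg x z = x := by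
  have h := Subgroup.mem_center_iff.mp hz x
  unfold cjg
  rw [mul_assoc, h, ← mul_assoc, inv_mul_cancel, one_mul]

lemma gam_one (ω : G → G → G → ℂˣ) (hω : IsNormalized3Cocycle ω) (x y : G) :
    gam ω 1 x y = 1 := by
  unfold gam
  rw [hω.2 x y 1 (by simp), hω.2 1 _ _ (by simp), hω.2 x 1 _ (by simp)]
  simp

lemma gam_central (ω : G → G → G → ℂˣ) {g : G} (hg : g ∈ Subgroup.center G) (x y : G) :
    gam ω g x y = ω x y g * ω g x y / ω x g y := by
  unfold gam
  rw [cjg_central x g hg, cjg_central y g hg]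

lemma key (ω : G → G → G → ℂˣ) (hω : IsNormalized3Cocycle ω) {g h : G}
    (hg : g ∈ Subgroup.center G) (hh : h ∈ Subgroup.center G) (x y : G) :
    (ω x y g * ω g x y) * ((ω x y h * ω h x y) * (ω x (g*h) y *
      (ω g (x*y) h * (ω g h x * (ω x g h * (ω g h y * ω y g h))))))
  = (ω x g y) * ((ω x h y) * ((ω x y (g*h) * ω (g*h) x y) *
      (ω g x h * (ω g y h * (ω g h (x*y) * ω (x*y) g h))))) := by
  have hgc : ∀ b : G, b * g = g * b := fun b => Subgroup.mem_center_iff.mp hg b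
  have hhc : ∀ b : G, b * h = h * b := fun b => Subgroup.mem_center_iff.mp hh b
  have e1 := hω.1 x y g h
  have e2 := hω.1 x g y h
  have e3 := hω.1 x g h y
  have e4 := hω.1 g x y h
  have e5 := hω.1 g x h y
  have e6 := hω.1 g h x y
  rw [hgc y] at e1
  rw [hgc x, hhc y] at e2
  rw [hgc x] at e3
  rw [hhc y] at e4
  rw [hhc x] at e5
  have hA : (ω y g h * ω x (g*y) h * ω x y g) *
      ((ω (g*x) y h * ω x g (h*y)) *
      ((ω g h y * ω x (g*h) y * ω x g h) *
      ((ω x y h * ω g (x*y) h * ω g x y) *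
      ((ω (g*x) h y * ω g x (h*y)) *
      (ω h x y * ω g (h*x) y * ω g h x)))))
    = (ω (x*y) g h * ω x y (g*h)) *
      ((ω g y h * ω x (g*y) h * ω x g y) *
      ((ω (g*x) h y * ω x g (h*y)) *
      ((ω (g*x) y h * ω g x (h*y)) *
      ((ω x h y * ω g (h*x) y * ω g x h) *
      (ω (g*h) x y * ω g h (x*y)))))) := by
    rw [e1, ← e2, e3, e4, ← e5, e6]
  have k0 : ((ω x y g * ω g x y) * ((ω x y h * ω h x y) * (ω x (g*h) y *
      (ω g (x*y) h * (ω g h x * (ω x g h * (ω g h y * ω y g h))))))) *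
      ((ω (x*y) g h * ω x y (g*h)) *
      ((ω g y h * ω x (g*y) h * ω x g y) *
      ((ω (g*x) h y * ω x g (h*y)) *
      ((ω (g*x) y h * ω g x (h*y)) *
      ((ω x h y * ω g (h*x) y * ω g x h) *
      (ω (g*h) x y * ω g h (x*y)))))))
    = ((ω x g y) * ((ω x h y) * ((ω x y (g*h) * ω (g*h) x y) *
      (ω g x h * (ω g y h * (ω g h (x*y) * ω (x*y) g h)))))) *
      ((ω y g h * ω x (g*y) h * ω x y g) *
      ((ω (g*x) y h * ω x g (h*y)) *
      ((ω g h y * ω x (g*h) y * ω x g h) *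
      ((ω x y h * ω g (x*y) h * ω g x y) *
      ((ω (g*x) h y * ω g x (h*y)) *
      (ω h x y * ω g (h*x) y * ω g h x)))))) := by
    rw [Units.ext_iff]
    push_cast
    ring
  exact mul_right_cancel (k0.trans (by rw [hA]))

lemma gam_mul (ω : G → G → G → ℂˣ) (hω : IsNormalized3Cocycle ω) {g h : G}
    (hg : g ∈ Subgroup.center G) (hh : h ∈ Subgroup.center G) (x y : G) :
    gam ω (g*h) x y = gam ω g x y * gam ω h x y *
      ((ω g h x * ω x g h / ω g x h) * (ω g h y * ω y g h / ω g y h) /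
        (ω g h (x*y) * ω (x*y) g h / ω g (x*y) h)) := by
  have hgh : g * h ∈ Subgroup.center G := mul_mem hg hh
  rw [gam_central ω hg, gam_central ω hh, gam_central ω hgh]
  have k := key ω hω hg hh x y
  rw [Units.ext_iff] at k ⊢
  push_cast at k ⊢
  field_simp at k ⊢
  linear_combination -k

end Aux

theorem Zomega_is_subgroup {G : Type*} [Group G] [Finite G]
    (ω : G → G → G → ℂˣ) (hω : IsNormalized3Cocycle ω) :
    let S : Set G := {g | g ∈ Subgroup.center G ∧ Is2Coboundary (gam ω g)}
    (1 : G) ∈ S ∧ (∀ a b : G, a ∈ S → b ∈ S → a * b ∈ S) ∧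
      (∀ a : G, a ∈ S → a⁻¹ ∈ S) := by
  intro S
  refine ⟨⟨Subgroup.one_mem _, fun _ => 1, rfl, ?_⟩, ?_, ?_⟩
  · intro x y
    rw [gam_one ω hω]
    simp
  · rintro a b ⟨ha, u, hu1, hu⟩ ⟨hb, v, hv1, hv⟩
    refine ⟨mul_mem ha hb, fun t => u t * v t * (ω a b t * ω t a b / ω a t b), ?_, ?_⟩
    · beta_reduce
      rw [hu1, hv1, hω.2 a b 1 (by simp), hω.2 1 a b (by simp), hω.2 a 1 b (by simp)]
      simp
    · intro x y
      beta_reduce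
      rw [gam_mul ω hω ha hb, hu, hv]
      rw [Units.ext_iff]
      push_cast
      field_simp
  · rintro a ⟨ha, u, hu1, hu⟩
    have hai : a⁻¹ ∈ Subgroup.center G := inv_mem ha
    refine ⟨hai, fun t => (u t * (ω a a⁻¹ t * ω t a a⁻¹ / ω a t a⁻¹))⁻¹, ?_, ?_⟩
    · beta_reduce
      rw [hu1, hω.2 a a⁻¹ 1 (by simp), hω.2 1 a a⁻¹ (by simp), hω.2 a 1 a⁻¹ (by simp)]
      simp
    · intro x y
      beta_reduce
      have k := gam_mul ω hω ha hai x y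
      rw [mul_inv_cancel, gam_one ω hω, hu] at k
      have k2 : gam ω a⁻¹ x y =
          ((u x * u y / u (x*y)) *
            ((ω a a⁻¹ x * ω x a a⁻¹ / ω a x a⁻¹) * (ω a a⁻¹ y * ω y a a⁻¹ / ω a y a⁻¹) /
              (ω a a⁻¹ (x*y) * ω (x*y) a a⁻¹ / ω a (x*y) a⁻¹)))⁻¹ := by
        rw [eq_inv_iff_mul_eq_one, k]
        rw [mul_left_comm, mul_assoc]
      rw [k2]
      rw [Units.ext_iff]
      push_cast
      field_simp
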